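/- arXiv:1707.07094 — 2 statements merged into one kernel-verified Lean document; each statement's English description precedes it below -/
import Mathlib

section
/- Let f be c-strongly convex and differentiable. If ∇f(v₁) + Bᵀλ₁ = 0 and ∇f(v₂) + Bᵀλ₂ = 0, then c‖v₁ − v₂‖² ≤ ⟨B(v₁ − v₂), λ₂ − λ₁⟩; in particular ‖v₁ − v₂‖ ≤ (σ_max(B)/c)‖λ₁ − λ₂‖. -/
set_option maxHeartbeats 1000000
set_option synthInstance.maxHeartbeats 400000

open RealInnerProductSpace

/-- If `f` is `c`-strongly convex with gradient `∇f` and `∇f(v₁) + Bᵀλ₁ = 0`,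
`∇f(v₂) + Bᵀλ₂ = 0`, then `c‖v₁-v₂‖² ≤ ⟪B(v₁-v₂), λ₂-λ₁⟫`; in particular
`‖v₁-v₂‖ ≤ (σ_max(B)/c)‖λ₁-λ₂‖` with `σ_max(B)` the operator norm of `B`. -/
theorem stmt13 {n : ℕ} (f : EuclideanSpace ℝ (Fin n) → ℝ)
    (Gf : EuclideanSpace ℝ (Fin n) → EuclideanSpace ℝ (Fin n))
    (hf : ∀ x, HasGradientAt f (Gf x) x)
    (c : ℝ) (hc : 0 < c)
    (hsc : ∀ x y, c * ‖x - y‖ ^ 2 ≤ ⟪x - y, Gf x - Gf y⟫)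
    (B : Matrix (Fin n) (Fin n) ℝ)
    (v₁ v₂ l₁ l₂ : EuclideanSpace ℝ (Fin n))
    (h1 : Gf v₁ + Matrix.toEuclideanLin B.transpose l₁ = 0)
    (h2 : Gf v₂ + Matrix.toEuclideanLin B.transpose l₂ = 0) :
    c * ‖v₁ - v₂‖ ^ 2 ≤ ⟪Matrix.toEuclideanLin B (v₁ - v₂), l₂ - l₁⟫ ∧
    ‖v₁ - v₂‖ ≤ (‖Matrix.toEuclideanCLM (𝕜 := ℝ) B‖ / c) * ‖l₁ - l₂‖ := by
  have hT : B.transpose = B.conjTranspose := by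
    ext i j; simp [Matrix.conjTranspose_apply]
  have hgrad : Gf v₁ - Gf v₂ = Matrix.toEuclideanLin B.transpose (l₂ - l₁) := by
    have := congrArg₂ (· - ·) h1 h2
    simp only [map_sub] at this ⊢
    linear_combination (norm := abel) this
  have key : c * ‖v₁ - v₂‖ ^ 2 ≤ ⟪Matrix.toEuclideanLin B (v₁ - v₂), l₂ - l₁⟫ := by
    calc c * ‖v₁ - v₂‖ ^ 2 ≤ ⟪v₁ - v₂, Gf v₁ - Gf v₂⟫ := hsc v₁ v₂
    _ = ⟪v₁ - v₂, Matrix.toEuclideanLin B.transpose (l₂ - l₁)⟫ := by rw [hgrad]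
    _ = ⟪Matrix.toEuclideanLin B (v₁ - v₂), l₂ - l₁⟫ := by
        rw [hT, Matrix.toEuclideanLin_conjTranspose_eq_adjoint,
          LinearMap.adjoint_inner_right]
  refine ⟨key, ?_⟩
  rcases eq_or_ne v₁ v₂ with h | h
  · simp only [h, sub_self, norm_zero]
    exact mul_nonneg (div_nonneg (norm_nonneg _) hc.le) (norm_nonneg _)
  · have hv : 0 < ‖v₁ - v₂‖ := by simpa [sub_eq_zero] using h
    have hb : ⟪Matrix.toEuclideanLin B (v₁ - v₂), l₂ - l₁⟫ ≤
        ‖Matrix.toEuclideanCLM (𝕜 := ℝ) B‖ * ‖v₁ - v₂‖ * ‖l₁ - l₂‖ := by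
      calc _ ≤ ‖Matrix.toEuclideanLin B (v₁ - v₂)‖ * ‖l₂ - l₁‖ := real_inner_le_norm _ _
      _ ≤ ‖Matrix.toEuclideanCLM (𝕜 := ℝ) B‖ * ‖v₁ - v₂‖ * ‖l₂ - l₁‖ := by
          apply mul_le_mul_of_nonneg_right _ (norm_nonneg _)
          have := (Matrix.toEuclideanCLM (𝕜 := ℝ) B).le_opNorm (v₁ - v₂)
          simpa [← Matrix.coe_toEuclideanCLM_eq_toEuclideanLin] using this
      _ = _ := by rw [norm_sub_rev l₂ l₁]
    have := key.trans hb
    rw [div_mul_eq_mul_div, le_div_iff₀ hc]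
    generalize hbn : ‖Matrix.toEuclideanCLM (𝕜 := ℝ) B‖ = bn at this ⊢
    generalize han : ‖v₁ - v₂‖ = an at this hv ⊢
    generalize hln : ‖l₁ - l₂‖ = ln at this ⊢
    nlinarith [this, hv]
end

section
/- Let B be a symmetric positive definite matrix and define the linear dynamical map T(q, λ) = (P_Q(q − α(γ(B⁻¹(q+w) − μ) − λ)), λ + β(B(μ − Bλ) − P_Q(q − α(γ(B⁻¹(q+w)−μ) − λ)) − w)) encoding one PPD iteration with v-substitution v = μ − Bλ. A fixed point (q*, λ*) of T satisfies the KKT conditions of the constrained problem: ∇f₁(v*) + Bλ* = 0 with v* = μ − Bλ*, λ* − γ(B⁻¹(q*+w) − μ) ∈ N_Q(q*), and Bv* = q* + w. -/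
open RealInnerProductSpace

lemma proj_var_ineq {n : ℕ} (Q : Set (EuclideanSpace ℝ (Fin n))) (hQconv : Convex ℝ Q)
    (z v : EuclideanSpace ℝ (Fin n)) (hv : v ∈ Q)
    (hmin : ∀ y ∈ Q, ‖z - v‖ ≤ ‖z - y‖) :
    ∀ y ∈ Q, ⟪z - v, y - v⟫ ≤ 0 := by
  haveI : Nonempty Q := ⟨⟨v, hv⟩⟩
  have h : ‖z - v‖ = ⨅ w : Q, ‖z - w‖ := by
    apply le_antisymm
    · exact le_ciInf fun w => hmin w w.2
    · exact ciInf_le ⟨0, fun x ⟨w, hw⟩ => hw ▸ norm_nonneg _⟩ (⟨v, hv⟩ : Q)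
  exact (norm_eq_iInf_iff_real_inner_le_zero hQconv hv).mp h

/-- A fixed point `(q*, λ*)` of one PPD iteration (with the substitution `v = μ - Bλ`)
satisfies the KKT conditions: `∇f₁(v*) + Bλ* = 0` with `v* = μ - Bλ*`,
`λ* - γ(B⁻¹(q*+w) - μ) ∈ N_Q(q*)`, and `Bv* = q* + w`. -/
theorem stmt18 {n : ℕ} (B : Matrix (Fin n) (Fin n) ℝ) (hB : B.PosDef)
    (Q : Set (EuclideanSpace ℝ (Fin n)))
    (hQne : Q.Nonempty) (hQcl : IsClosed Q) (hQconv : Convex ℝ Q)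
    (P : EuclideanSpace ℝ (Fin n) → EuclideanSpace ℝ (Fin n))
    (hP : ∀ z, P z ∈ Q ∧ ∀ y ∈ Q, ‖z - P z‖ ≤ ‖z - y‖)
    (α β γ : ℝ) (hα : 0 < α) (hβ : 0 < β) (hγ : 0 < γ)
    (μ w qs ls : EuclideanSpace ℝ (Fin n))
    (hfixq : qs = P (qs - α • (γ • (Matrix.toEuclideanLin B⁻¹ (qs + w) - μ) - ls)))
    (hfixl : ls = ls + β • (Matrix.toEuclideanLin B (μ - Matrix.toEuclideanLin B ls)
      - qs - w)) :
    ((μ - Matrix.toEuclideanLin B ls) - μ) + Matrix.toEuclideanLin B ls = 0 ∧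
    (∀ y ∈ Q, ⟪ls - γ • (Matrix.toEuclideanLin B⁻¹ (qs + w) - μ), y - qs⟫ ≤ 0) ∧
    Matrix.toEuclideanLin B (μ - Matrix.toEuclideanLin B ls) = qs + w := by
  refine ⟨by abel, ?_, ?_⟩
  · set z := qs - α • (γ • (Matrix.toEuclideanLin B⁻¹ (qs + w) - μ) - ls) with hz
    have hqsQ : qs ∈ Q := hfixq ▸ (hP z).1
    have hmin : ∀ y ∈ Q, ‖z - qs‖ ≤ ‖z - y‖ := fun y hy => by
      rw [hfixq]; exact (hP z).2 y hy
    have key := proj_var_ineq Q hQconv z qs hqsQ hmin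
    intro y hy
    have h1 := key y hy
    have hzq : z - qs = α • (ls - γ • (Matrix.toEuclideanLin B⁻¹ (qs + w) - μ)) := by
      rw [hz]; module
    rw [hzq, real_inner_smul_left] at h1
    nlinarith [h1]
  · have h : β • (Matrix.toEuclideanLin B (μ - Matrix.toEuclideanLin B ls) - qs - w)
        = 0 := by
      have := hfixl
      nth_rewrite 1 [show ls = ls + 0 by simp] at this
      exact (add_left_cancel this).symm
    have h2 : Matrix.toEuclideanLin B (μ - Matrix.toEuclideanLin B ls) - qs - w = 0 :=
      (smul_eq_zero.mp h).resolve_left hβ.ne'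
    have := sub_eq_zero.mp (by rw [sub_sub] at h2; exact h2)
    exact this
end
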